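/- Uniqueness of coefficients for the ₁φ₁ recurrence: if rational functions S₁, T₁, S₂, T₂ in (a, c, x) over the field of rational functions in q satisfy, for all (a,c,x) in a nonempty open region, Sᵢ(a,c,x) · ₁φ₁(aq; cq; q, xq) + Tᵢ(a,c,x) · ₁φ₁(a; c; q, x) being equal for i = 1, 2, then S₁ = S₂ and T₁ = T₂. Equivalently, the ratio ₁φ₁(aq; cq; q, xq) / ₁φ₁(a; c; q, x) is not a rational function of (a, c, x). -/

import Mathlib

open scoped BigOperators

/-- q-shifted factorial (a;q)_j -/
noncomputable def qPoch (a q : ℂ) (j : ℕ) : ℂ :=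
  ∏ i ∈ Finset.range j, (1 - a * q ^ i)

/-- infinite q-shifted factorial (a;q)_∞ -/
noncomputable def qPochInf (a q : ℂ) : ℂ :=
  ∏' j : ℕ, (1 - a * q ^ j)

/-- basic hypergeometric series ₁φ₁(a; c; q, x) -/
noncomputable def phi11 (a c q x : ℂ) : ℂ :=
  ∑' j : ℕ, qPoch a q j / (qPoch q q j * qPoch c q j) *
    (-1) ^ j * q ^ (j * (j - 1) / 2) * x ^ j

/-- basic hypergeometric series ₀φ₁(–; c; q, x) -/
noncomputable def phi01 (c q x : ℂ) : ℂ :=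
  ∑' j : ℕ, q ^ (j * (j - 1)) * x ^ j / (qPoch q q j * qPoch c q j)

/-- basic hypergeometric series ₂φ₁(a, b; c; q, x) -/
noncomputable def phi21 (a b c q x : ℂ) : ℂ :=
  ∑' j : ℕ, qPoch a q j * qPoch b q j / (qPoch q q j * qPoch c q j) * x ^ j


namespace Phi11Aux

open Polynomial Finset


open Polynomial Finset

lemma qPoch_zero (a q : ℂ) : qPoch a q 0 = 1 := by simp [qPoch]

lemma qPoch_succ (a q : ℂ) (n : ℕ) : qPoch a q (n+1) = qPoch a q n * (1 - a * q ^ n) := by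
  simp [qPoch, Finset.prod_range_succ]

lemma qPoch_succ_left (a q : ℂ) (n : ℕ) : qPoch a q (n+1) = (1 - a) * qPoch (a*q) q n := by
  rw [qPoch, Finset.prod_range_succ']
  simp only [pow_zero, mul_one, qPoch]
  rw [mul_comm]
  congr 1
  apply Finset.prod_congr rfl
  intro i _
  ring_nf

lemma qPoch_one_vanish (q : ℂ) {j : ℕ} (hj : 1 ≤ j) : qPoch 1 q j = 0 := by
  rw [qPoch]
  apply Finset.prod_eq_zero (Finset.mem_range.2 (by omega : (0:ℕ) < j))
  simp

lemma qPoch_inv_pow_vanish (q : ℂ) (hq : q ≠ 0) {k j : ℕ} (hkj : k < j) :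
    qPoch ((q^k)⁻¹) q j = 0 := by
  rw [qPoch]
  apply Finset.prod_eq_zero (Finset.mem_range.2 hkj)
  rw [inv_mul_cancel₀ (pow_ne_zero _ hq)]
  ring

/-- nonvanishing of qPoch for real parameters in [0,1) type situations -/
lemma qPoch_real_ne_zero {q r : ℝ} (hq0 : 0 < q) (hq1 : q ≤ 1) (hr0 : 0 ≤ r) (hr1 : r < 1)
    (j : ℕ) : qPoch (r : ℂ) (q : ℂ) j ≠ 0 := by
  rw [qPoch]
  apply Finset.prod_ne_zero_iff.2
  intro i _
  have h1 : (1:ℂ) - (r:ℂ) * (q:ℂ)^i = ((1 - r * q^i : ℝ) : ℂ) := by push_cast; ring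
  rw [h1]
  rw [Ne, Complex.ofReal_eq_zero]
  have hqi : q ^ i ≤ 1 := pow_le_one₀ hq0.le hq1
  have : r * q ^ i < 1 := by
    calc r * q ^ i ≤ r * 1 := by
          apply mul_le_mul_of_nonneg_left hqi hr0
      _ = r := mul_one r
      _ < 1 := hr1
  linarith

/-- nonvanishing of qPoch (q^(-k)) up to index k -/
lemma qPoch_inv_pow_ne_zero {q : ℝ} (hq0 : 0 < q) (hq1 : q < 1) {k j : ℕ} (hjk : j ≤ k) :
    qPoch (((q:ℂ)^k)⁻¹) (q:ℂ) j ≠ 0 := by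
  rw [qPoch]
  apply Finset.prod_ne_zero_iff.2
  intro i hi
  have hik : i < k := lt_of_lt_of_le (Finset.mem_range.1 hi) hjk
  have hqk : ((q:ℂ))^k ≠ 0 := pow_ne_zero _ (by exact_mod_cast hq0.ne')
  have h1 : ((q:ℂ)^k)⁻¹ * (q:ℂ)^i = ((q^i / q^k : ℝ) : ℂ) := by
    push_cast
    field_simp
  rw [h1]
  have : (1:ℝ) < q^i / q^k := by
    rw [lt_div_iff₀ (by positivity)]
    rw [one_mul]
    exact pow_lt_pow_right_of_lt_one₀ hq0 hq1 hik
  intro hcon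
  have : (1:ℂ) - ((q ^ i / q ^ k : ℝ):ℂ) = 0 := hcon
  rw [sub_eq_zero] at this
  have : (1:ℝ) = q^i/q^k := by exact_mod_cast this
  linarith


noncomputable def u (Q a c : ℂ) (j : ℕ) : ℂ :=
  qPoch a Q j / (qPoch Q Q j * qPoch c Q j) * (-1)^j * Q^(j*(j-1)/2)

noncomputable def Bc (Q a c : ℂ) : ℂ := (a*Q-(1-a))/(1-c)
noncomputable def Cc (Q a c : ℂ) : ℂ := -(Q*c*(1-a*Q))/((1-c)*(1-c*Q))
noncomputable def Dc (Q a c : ℂ) : ℂ := a*Q^2*(1-a*Q)/((1-c)*(1-c*Q))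


lemma u_zero (Q a c : ℂ) : u Q a c 0 = 1 := by simp [u, qPoch]

lemma u_eq_zero {Q a c : ℂ} {j : ℕ} (h : qPoch a Q j = 0) : u Q a c j = 0 := by
  simp [u, h]

set_option maxHeartbeats 1000000 in

/-- free-variable core identity, case j = i+2 -/
lemma key_calc (Q a c Z W V s τ p : ℂ)
    (hW : W ≠ 0) (hV : V ≠ 0) (h1 : 1 - Q*p ≠ 0) (h2 : 1 - Q^2*p ≠ 0)
    (hc : 1 - c ≠ 0) (hcq : 1 - c*Q ≠ 0) (hct : 1 - c*Q^2*p ≠ 0) :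
    (1-a)*((1-a*Q)*Z) / ((W*(1-Q*p)*(1-Q^2*p))*((1-c)*((1-c*Q)*V))) * s * (τ*(p^2*Q))
    = ((1-a*Q)*(Z*(1-a*Q^2*p))) / ((W*(1-Q*p)*(1-Q^2*p))*((1-c*Q)*(V*(1-c*Q^2*p)))) * s * (τ*(p^2*Q)) * (Q^2*p)
    + ((a*Q-(1-a))/(1-c)) * ((1-a*Q)*Z/((W*(1-Q*p))*((1-c*Q)*V))*(-s)*(τ*p)) * (Q*p)
    + (-(Q*c*(1-a*Q))/((1-c)*(1-c*Q))) * ((Z*(1-a*Q^2*p))/((W*(1-Q*p))*(V*(1-c*Q^2*p)))*(-s)*(τ*p)) * (Q^2*p^2)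
    + (a*Q^2*(1-a*Q)/((1-c)*(1-c*Q))) * (Z/(W*V)*s*τ) * (p^2) := by
  set D : ℂ := (W*(1-Q*p)*(1-Q^2*p))*((1-c)*((1-c*Q)*V))*(1-c*Q^2*p) with hD
  have hDne : D ≠ 0 := by
    simp only [hD]
    apply mul_ne_zero (mul_ne_zero (mul_ne_zero (mul_ne_zero hW h1) h2)
      (mul_ne_zero hc (mul_ne_zero hcq hV))) hct
  have hcq' : 1 - Q*c ≠ 0 := by rw [mul_comm]; exact hcq
  have hct' : 1 - Q^2*p*c ≠ 0 := by rw [show Q^2*p*c = c*Q^2*p by ring]; exact hct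
  have hct'' : 1 - Q^2*c*p ≠ 0 := by rw [show Q^2*c*p = c*Q^2*p by ring]; exact hct
  have e0 : (1-a)*((1-a*Q)*Z) / ((W*(1-Q*p)*(1-Q^2*p))*((1-c)*((1-c*Q)*V))) * s * (τ*(p^2*Q))
      = ((1-a)*(1-a*Q)*Z*s*τ*p^2*Q*(1-c*Q^2*p))/D := by
    rw [hD, eq_div_iff hDne, hD]
    field_simp
  have e1 : ((1-a*Q)*(Z*(1-a*Q^2*p))) / ((W*(1-Q*p)*(1-Q^2*p))*((1-c*Q)*(V*(1-c*Q^2*p)))) * s * (τ*(p^2*Q)) * (Q^2*p)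
      = ((1-a*Q)*Z*(1-a*Q^2*p)*s*τ*p^2*Q*Q^2*p*(1-c))/D := by
    rw [hD, eq_div_iff hDne, hD]
    field_simp
  have e2 : ((a*Q-(1-a))/(1-c)) * ((1-a*Q)*Z/((W*(1-Q*p))*((1-c*Q)*V))*(-s)*(τ*p)) * (Q*p)
      = (-((a*Q-(1-a))*(1-a*Q)*Z*s*τ*p*Q*p*(1-Q^2*p)*(1-c*Q^2*p)))/D := by
    rw [hD, eq_div_iff hDne, hD]
    field_simp
  have e3 : (-(Q*c*(1-a*Q))/((1-c)*(1-c*Q))) * ((Z*(1-a*Q^2*p))/((W*(1-Q*p))*(V*(1-c*Q^2*p)))*(-s)*(τ*p)) * (Q^2*p^2)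
      = (Q*c*(1-a*Q)*Z*(1-a*Q^2*p)*s*τ*p*Q^2*p^2*(1-Q^2*p))/D := by
    rw [hD, eq_div_iff hDne, hD]
    field_simp
  have e4 : (a*Q^2*(1-a*Q)/((1-c)*(1-c*Q))) * (Z/(W*V)*s*τ) * (p^2)
      = (a*Q^2*(1-a*Q)*Z*s*τ*p^2*(1-Q*p)*(1-Q^2*p)*(1-c*Q^2*p))/D := by
    rw [hD, eq_div_iff hDne, hD]
    field_simp
  rw [e0, e1, e2, e3, e4, ← add_div, ← add_div, ← add_div]
  congr 1
  ring


lemma tri2 (i : ℕ) : (i+2)*((i+2)-1)/2 = i*(i-1)/2 + (2*i+1) := by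
  have h1 : (i+2)*((i+2)-1) = i*(i-1) + 2*(2*i+1) := by
    cases i with
    | zero => rfl
    | succ n => simp only [Nat.add_sub_cancel, Nat.succ_sub_one]; ring
  have h2 : ∃ t, i*(i-1) = 2*t := by
    cases i with
    | zero => exact ⟨0, rfl⟩
    | succ n =>
      simp only [Nat.succ_sub_one]
      rcases Nat.even_mul_succ_self n with ⟨t, ht⟩
      exact ⟨t, by rw [mul_comm (n+1) n]; omega⟩
  rcases h2 with ⟨t, ht⟩
  omega

lemma tri1 (i : ℕ) : (i+1)*((i+1)-1)/2 = i*(i-1)/2 + i := by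
  have h1 : (i+1)*((i+1)-1) = i*(i-1) + 2*i := by
    cases i with
    | zero => rfl
    | succ n => simp only [Nat.add_sub_cancel, Nat.succ_sub_one]; ring
  have h2 : ∃ t, i*(i-1) = 2*t := by
    cases i with
    | zero => exact ⟨0, rfl⟩
    | succ n =>
      simp only [Nat.succ_sub_one]
      rcases Nat.even_mul_succ_self n with ⟨t, ht⟩
      exact ⟨t, by rw [mul_comm (n+1) n]; omega⟩
  rcases h2 with ⟨t, ht⟩
  omega

set_option maxHeartbeats 1000000 in
lemma main2 (Q a c : ℂ) (i : ℕ)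
    (hW : qPoch Q Q i ≠ 0) (hV : qPoch (c*Q^2) Q i ≠ 0)
    (h1 : 1 - Q*Q^i ≠ 0) (h2 : 1 - Q^2*Q^i ≠ 0)
    (hc : 1 - c ≠ 0) (hcq : 1 - c*Q ≠ 0) (hct : 1 - c*Q^2*Q^i ≠ 0) :
    u Q a c (i+2) = u Q (a*Q) (c*Q) (i+2) * Q^(i+2) + Bc Q a c * u Q (a*Q) (c*Q) (i+1) * Q^(i+1)
      + Cc Q a c * u Q (a*Q^2) (c*Q^2) (i+1) * Q^(2*(i+1))
      + Dc Q a c * u Q (a*Q^2) (c*Q^2) i * Q^(2*i) := by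
  have harga : a*Q*Q = a*Q^2 := by ring
  have hargc : c*Q*Q = c*Q^2 := by ring
  have dA : qPoch a Q (i+2) = (1-a)*((1-a*Q)*qPoch (a*Q^2) Q i) := by
    rw [qPoch_succ_left, qPoch_succ_left, harga]
  have dAq2 : qPoch (a*Q) Q (i+2) = (1-a*Q)*(qPoch (a*Q^2) Q i*(1-a*Q^2*Q^i)) := by
    rw [qPoch_succ_left, harga, qPoch_succ]
  have dAq1 : qPoch (a*Q) Q (i+1) = (1-a*Q)*qPoch (a*Q^2) Q i := by
    rw [qPoch_succ_left, harga]
  have dA2 : qPoch (a*Q^2) Q (i+1) = qPoch (a*Q^2) Q i*(1-a*Q^2*Q^i) := qPoch_succ _ _ _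
  have dQ2 : qPoch Q Q (i+2) = qPoch Q Q i*(1-Q*Q^i)*(1-Q^2*Q^i) := by
    rw [qPoch_succ, qPoch_succ]
    have : Q*Q^(i+1) = Q^2*Q^i := by ring
    rw [this]
  have dQ1 : qPoch Q Q (i+1) = qPoch Q Q i*(1-Q*Q^i) := qPoch_succ _ _ _
  have dC : qPoch c Q (i+2) = (1-c)*((1-c*Q)*qPoch (c*Q^2) Q i) := by
    rw [qPoch_succ_left, qPoch_succ_left, hargc]
  have dCq2 : qPoch (c*Q) Q (i+2) = (1-c*Q)*(qPoch (c*Q^2) Q i*(1-c*Q^2*Q^i)) := by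
    rw [qPoch_succ_left, hargc, qPoch_succ]
  have dCq1 : qPoch (c*Q) Q (i+1) = (1-c*Q)*qPoch (c*Q^2) Q i := by
    rw [qPoch_succ_left, hargc]
  have dC2 : qPoch (c*Q^2) Q (i+1) = qPoch (c*Q^2) Q i*(1-c*Q^2*Q^i) := qPoch_succ _ _ _
  have hsgn2 : ((-1:ℂ))^(i+2) = (-1)^i := by rw [pow_add]; norm_num
  have hsgn1 : ((-1:ℂ))^(i+1) = -((-1:ℂ))^i := by rw [pow_succ]; ring
  have hp2 : Q^((i+2)*((i+2)-1)/2) = Q^(i*(i-1)/2)*((Q^i)^2*Q) := by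
    rw [tri2, pow_add]
    congr 1
    rw [mul_comm 2 i, pow_succ, pow_mul]
  have hp1 : Q^((i+1)*((i+1)-1)/2) = Q^(i*(i-1)/2)*Q^i := by rw [tri1, pow_add]
  simp only [u, Bc, Cc, Dc]
  rw [dA, dAq2, dAq1, dA2, dQ2, dQ1, dC, dCq2, dCq1, dC2, hsgn2, hsgn1, hp2, hp1]
  have hkey := key_calc Q a c (qPoch (a*Q^2) Q i) (qPoch Q Q i) (qPoch (c*Q^2) Q i)
    ((-1)^i) (Q^(i*(i-1)/2)) (Q^i) hW hV h1 h2 hc hcq hct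
  have hQ2 : Q^(i+2) = Q^2*Q^i := by ring
  have hQ1 : Q^(i+1) = Q*Q^i := by ring
  have hQ22 : Q^(2*(i+1)) = Q^2*(Q^i)^2 := by
    rw [mul_comm 2 (i+1), pow_mul, pow_succ]; ring
  have hQ20 : Q^(2*i) = (Q^i)^2 := by rw [mul_comm 2 i, pow_mul]
  rw [hQ2, hQ1, hQ22, hQ20]
  exact hkey


lemma u_one (Q x y : ℂ) : u Q x y 1 = (1-x)/((1-Q)*(1-y)) * (-1) := by
  simp [u, qPoch, Finset.prod_range_one]

lemma main1 (Q a c : ℂ) (hQ : 1 - Q ≠ 0) (hc : 1 - c ≠ 0) (hcq : 1 - c*Q ≠ 0) :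
    u Q a c 1 = u Q (a*Q) (c*Q) 1 * Q + Bc Q a c + Cc Q a c := by
  rw [u_one, u_one, Bc, Cc]
  have hcq' : 1 - Q*c ≠ 0 := by rw [mul_comm]; exact hcq
  field_simp
  ring

/-! ### the polynomial family -/

noncomputable def ak (Q : ℂ) (k : ℕ) : ℂ := (Q^k)⁻¹
noncomputable def cp (Q E : ℂ) (s : ℕ) : ℂ := E * Q^s
noncomputable def hcf (Q E : ℂ) (s k j : ℕ) : ℂ := u Q (ak Q k) (cp Q E s) j * (Q^s)^j
noncomputable def HP (Q E : ℂ) (M s k : ℕ) : Polynomial ℂ :=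
  ∑ j ∈ Finset.range (M+3), Polynomial.C (hcf Q E s k j) * Polynomial.X^j
noncomputable def Bh (Q E : ℂ) (s k : ℕ) : ℂ := Bc Q (ak Q k) (cp Q E s) * Q^s
noncomputable def Ch (Q E : ℂ) (s k : ℕ) : ℂ := Cc Q (ak Q k) (cp Q E s) * Q^s
noncomputable def Dh (Q E : ℂ) (s k : ℕ) : ℂ := Dc Q (ak Q k) (cp Q E s) * (Q^s)^2

lemma coeff_sum_CX (f : ℕ → ℂ) (N n : ℕ) :
    (∑ j ∈ Finset.range N, Polynomial.C (f j) * Polynomial.X^j).coeff n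
      = if n < N then f n else 0 := by
  rw [Polynomial.finset_sum_coeff]
  simp only [Polynomial.coeff_C_mul, Polynomial.coeff_X_pow, mul_ite, mul_one, mul_zero]
  rw [Finset.sum_ite_eq (Finset.range N) n f]
  simp [Finset.mem_range]

lemma hcf_vanish {Q : ℂ} (hQ : Q ≠ 0) (E : ℂ) {s k j : ℕ} (hkj : k < j) :
    hcf Q E s k j = 0 := by
  rw [hcf, ak, u_eq_zero (qPoch_inv_pow_vanish Q hQ hkj), zero_mul]

lemma coeff_HP {Q : ℂ} (hQ : Q ≠ 0) (E : ℂ) {M s k : ℕ} (hkM : k < M+3) (n : ℕ) :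
    (HP Q E M s k).coeff n = hcf Q E s k n := by
  rw [HP, coeff_sum_CX]
  by_cases h : n < M+3
  · rw [if_pos h]
  · rw [if_neg h]
    exact (hcf_vanish hQ E (by omega)).symm

lemma one_sub_ne {r : ℝ} (h1 : r < 1) : (1:ℂ) - (r:ℂ) ≠ 0 := by
  rw [sub_ne_zero]
  intro h
  have : (1:ℝ) = r := by exact_mod_cast h
  linarith

lemma ak_succ {Q : ℂ} (hQ : Q ≠ 0) (k : ℕ) : ak Q (k+1) = ak Q (k+2) * Q := by
  rw [ak, ak, pow_succ Q (k+1), mul_inv, mul_assoc, inv_mul_cancel₀ hQ, mul_one]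

lemma ak_two {Q : ℂ} (hQ : Q ≠ 0) (k : ℕ) : ak Q k = ak Q (k+2) * Q^2 := by
  rw [ak, ak, pow_add Q k 2, mul_inv, mul_assoc, inv_mul_cancel₀ (pow_ne_zero 2 hQ), mul_one]

lemma cp_succ (Q E : ℂ) (s : ℕ) : cp Q E (s+1) = cp Q E s * Q := by
  rw [cp, cp, pow_succ, mul_assoc]

lemma cp_two (Q E : ℂ) (s : ℕ) : cp Q E (s+2) = cp Q E s * Q^2 := by
  rw [cp, cp, pow_add, mul_assoc]

lemma coeff_X_mul' (p : Polynomial ℂ) (n : ℕ) :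
    (Polynomial.X * p).coeff n = if n = 0 then 0 else p.coeff (n-1) := by
  cases n with
  | zero => simp [Polynomial.mul_coeff_zero]
  | succ n => simp [Polynomial.coeff_X_mul]

lemma coeff_X2_mul (p : Polynomial ℂ) (n : ℕ) :
    (Polynomial.X^2 * p).coeff n = if n ≤ 1 then 0 else p.coeff (n-2) := by
  have h : Polynomial.X^2 * p = Polynomial.X * (Polynomial.X * p) := by ring
  rw [h, coeff_X_mul', coeff_X_mul']
  cases n with
  | zero => simp
  | succ n => cases n with
    | zero => simp
    | succ n => simp

section Rec

variable {q ε : ℝ}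

theorem HP_rec (hq0 : 0 < q) (hq1 : q < 1) (hε0 : 0 < ε) (hε1 : ε < 1)
    (M s k : ℕ) (hkM : k + 2 < M + 3) :
    HP (q:ℂ) (ε:ℂ) M s (k+2)
      = (1 + Polynomial.C (Bh (q:ℂ) (ε:ℂ) s (k+2)) * Polynomial.X) * HP (q:ℂ) (ε:ℂ) M (s+1) (k+1)
        + (Polynomial.C (Ch (q:ℂ) (ε:ℂ) s (k+2)) * Polynomial.X
            + Polynomial.C (Dh (q:ℂ) (ε:ℂ) s (k+2)) * Polynomial.X^2) * HP (q:ℂ) (ε:ℂ) M (s+2) k := by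
  set Q : ℂ := (q:ℂ) with hQdef
  set E : ℂ := (ε:ℂ) with hEdef
  have hQne : Q ≠ 0 := by
    rw [hQdef]
    exact_mod_cast hq0.ne'
  have hcast : ∀ t : ℕ, cp Q E t = ((ε*q^t : ℝ):ℂ) := by
    intro t
    rw [cp, hQdef, hEdef]
    push_cast
    ring
  have hlt1 : ∀ t : ℕ, ε * q^t < 1 :=
    fun t => lt_of_le_of_lt (mul_le_of_le_one_right hε0.le (pow_le_one₀ hq0.le hq1.le)) hε1
  have hge0 : ∀ t : ℕ, (0:ℝ) ≤ ε * q^t := fun t => by positivity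
  have hc : 1 - cp Q E s ≠ 0 := by rw [hcast s]; exact one_sub_ne (hlt1 s)
  have hcq : 1 - cp Q E s * Q ≠ 0 := by
    have h' : cp Q E s * Q = cp Q E (s+1) := (cp_succ Q E s).symm
    rw [h', hcast (s+1)]
    exact one_sub_ne (hlt1 (s+1))
  have hB := main1 Q (ak Q (k+2)) (cp Q E s)
    (by rw [hQdef]; exact one_sub_ne hq1) hc hcq
  rw [← ak_succ hQne k, ← cp_succ Q E s] at hB
  have hre : (1 + Polynomial.C (Bh Q E s (k+2)) * Polynomial.X) * HP Q E M (s+1) (k+1)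
        + (Polynomial.C (Ch Q E s (k+2)) * Polynomial.X
            + Polynomial.C (Dh Q E s (k+2)) * Polynomial.X^2) * HP Q E M (s+2) k
      = HP Q E M (s+1) (k+1)
        + Polynomial.C (Bh Q E s (k+2)) * (Polynomial.X * HP Q E M (s+1) (k+1))
        + (Polynomial.C (Ch Q E s (k+2)) * (Polynomial.X * HP Q E M (s+2) k)
            + Polynomial.C (Dh Q E s (k+2)) * (Polynomial.X * (Polynomial.X * HP Q E M (s+2) k))) := by
    ring
  rw [hre]
  apply Polynomial.ext
  intro n
  simp only [Polynomial.coeff_add, Polynomial.coeff_C_mul]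
  match n with
  | 0 =>
    rw [Polynomial.mul_coeff_zero, Polynomial.mul_coeff_zero, Polynomial.mul_coeff_zero]
    simp only [Polynomial.coeff_X_zero, zero_mul, mul_zero, add_zero]
    rw [coeff_HP hQne E (by omega) 0, coeff_HP hQne E (by omega) 0]
    simp [hcf, u_zero]
  | 1 =>
    rw [coeff_X_mul' (HP Q E M (s+1) (k+1)) 1, coeff_X_mul' (HP Q E M (s+2) k) 1,
      coeff_X_mul' (Polynomial.X * HP Q E M (s+2) k) 1]
    norm_num
    rw [coeff_HP hQne E (by omega) 1, coeff_HP hQne E (by omega) 1,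
      coeff_HP hQne E (by omega) 0, coeff_HP hQne E (by omega) 0]
    simp only [hcf, u_zero, one_mul, pow_zero, mul_one, pow_one]
    simp only [Bh, Ch]
    rw [pow_succ Q s]
    linear_combination Q^s * hB
  | (n+2) =>
    have h0 : ¬ (n+2 = 0) := by omega
    have r1 : n+2-1 = n+1 := rfl
    have r2 : n+1-1 = n := rfl
    have h0' : ¬ (n+1 = 0) := by omega
    rw [coeff_X_mul' (HP Q E M (s+1) (k+1)) (n+2), if_neg h0, r1,
      coeff_X_mul' (HP Q E M (s+2) k) (n+2), if_neg h0, r1,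
      coeff_X_mul' (Polynomial.X * HP Q E M (s+2) k) (n+2), if_neg h0, r1,
      coeff_X_mul' (HP Q E M (s+2) k) (n+1), if_neg h0', r2]
    rw [coeff_HP hQne E (by omega) (n+2), coeff_HP hQne E (by omega) (n+2),
      coeff_HP hQne E (by omega) (n+1), coeff_HP hQne E (by omega) (n+1),
      coeff_HP hQne E (by omega) n]
    have hW : qPoch Q Q n ≠ 0 := by
      rw [hQdef]
      exact qPoch_real_ne_zero hq0 hq1.le hq0.le hq1 n
    have hV : qPoch (cp Q E s * Q^2) Q n ≠ 0 := by
      have h2 : cp Q E s * Q^2 = ((ε*q^(s+2) : ℝ):ℂ) := by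
        rw [← cp_two Q E s, hcast]
      rw [h2, hQdef]
      exact qPoch_real_ne_zero hq0 hq1.le (hge0 (s+2)) (hlt1 (s+2)) n
    have h1 : 1 - Q*Q^n ≠ 0 := by
      have h' : Q*Q^n = ((q^(n+1) : ℝ):ℂ) := by rw [hQdef]; push_cast; ring
      rw [h']
      exact one_sub_ne (pow_lt_one₀ hq0.le hq1 (by omega))
    have h2 : 1 - Q^2*Q^n ≠ 0 := by
      have h' : Q^2*Q^n = ((q^(n+2) : ℝ):ℂ) := by rw [hQdef]; push_cast; ring
      rw [h']
      exact one_sub_ne (pow_lt_one₀ hq0.le hq1 (by omega))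
    have hct : 1 - cp Q E s * Q^2 * Q^n ≠ 0 := by
      have h' : cp Q E s * Q^2 * Q^n = ((ε*q^(s+2+n) : ℝ):ℂ) := by
        rw [cp, hQdef, hEdef]
        push_cast
        ring
      rw [h']
      exact one_sub_ne (hlt1 (s+2+n))
    have hA := main2 Q (ak Q (k+2)) (cp Q E s) n hW hV h1 h2 hc hcq hct
    rw [← ak_succ hQne k, ← ak_two hQne k, ← cp_succ Q E s, ← cp_two Q E s] at hA
    simp only [hcf, Bh, Ch, Dh]
    have p1 : (Q^(s+1) : ℂ)^(n+2) = (Q^s)^(n+2) * Q^(n+2) := by rw [pow_succ Q s, mul_pow]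
    have p2 : (Q^(s+1) : ℂ)^(n+1) = (Q^s)^(n+1) * Q^(n+1) := by rw [pow_succ Q s, mul_pow]
    have p3 : (Q^(s+2) : ℂ)^(n+1) = (Q^s)^(n+1) * (Q^2)^(n+1) := by rw [pow_add Q s 2, mul_pow]
    have p4 : (Q^(s+2) : ℂ)^n = (Q^s)^n * (Q^2)^n := by rw [pow_add Q s 2, mul_pow]
    rw [p1, p2, p3, p4]
    rw [show Q^(2*(n+1)) = (Q^2)^(n+1) from pow_mul Q 2 (n+1),
      show Q^(2*n) = (Q^2)^n from pow_mul Q 2 n] at hA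
    linear_combination (Q^s)^(n+2) * hA

end Rec

lemma ak_zero (Q : ℂ) : ak Q 0 = 1 := by simp [ak]

lemma hcf_zero_idx (Q E : ℂ) (s k : ℕ) : hcf Q E s k 0 = 1 := by simp [hcf, u_zero]

lemma HP_zero (Q E : ℂ) (M s : ℕ) : HP Q E M s 0 = 1 := by
  rw [HP]
  rw [Finset.sum_eq_single 0]
  · rw [hcf_zero_idx]
    simp
  · intro j _ hj
    have h1 : 1 ≤ j := by omega
    have : hcf Q E s 0 j = 0 := by
      rw [hcf, u_eq_zero, zero_mul]
      rw [ak_zero]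
      exact qPoch_one_vanish Q h1
    rw [this]
    simp
  · intro h
    exact absurd (Finset.mem_range.2 (by omega)) h

noncomputable def Ee (Q E : ℂ) (M i : ℕ) : Polynomial ℂ :=
  Polynomial.C (Ch Q E (M-i) i) * Polynomial.X + Polynomial.C (Dh Q E (M-i) i) * Polynomial.X^2

noncomputable def Hh (Q E : ℂ) (M : ℕ) : ℕ → Polynomial ℂ
  | 0 => 0
  | 1 => 1
  | (k+2) => (1 + Polynomial.C (Bh Q E (M-(k+2)) (k+2)) * Polynomial.X) * Hh Q E M (k+1)
      + Ee Q E M (k+2) * Hh Q E M k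

lemma Hh_zero (Q E : ℂ) (M : ℕ) : Hh Q E M 0 = 0 := rfl
lemma Hh_one (Q E : ℂ) (M : ℕ) : Hh Q E M 1 = 1 := rfl
lemma Hh_succ (Q E : ℂ) (M k : ℕ) :
    Hh Q E M (k+2) = (1 + Polynomial.C (Bh Q E (M-(k+2)) (k+2)) * Polynomial.X) * Hh Q E M (k+1)
      + Ee Q E M (k+2) * Hh Q E M k := rfl

section Cas

variable {q ε : ℝ}

theorem casorati (hq0 : 0 < q) (hq1 : q < 1) (hε0 : 0 < ε) (hε1 : ε < 1) (M : ℕ) :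
    ∀ k, 1 ≤ k → k ≤ M →
      HP (q:ℂ) (ε:ℂ) M (M-k) k * Hh (q:ℂ) (ε:ℂ) M (k-1)
        - HP (q:ℂ) (ε:ℂ) M (M-(k-1)) (k-1) * Hh (q:ℂ) (ε:ℂ) M k
      = (-1)^k * ∏ i ∈ Finset.Icc 2 k, Ee (q:ℂ) (ε:ℂ) M i := by
  intro k hk
  induction k, hk using Nat.le_induction with
  | base =>
    intro _
    simp only [Nat.sub_self, Nat.sub_zero]
    rw [Hh_zero, Hh_one, HP_zero]
    have : Finset.Icc 2 1 = (∅ : Finset ℕ) := by decide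
    rw [this]
    simp
  | succ n hn IH =>
    intro hnM
    obtain ⟨j, rfl⟩ : ∃ j, n = j + 1 := ⟨n - 1, by omega⟩
    have hrec := HP_rec hq0 hq1 hε0 hε1 M (M-(j+2)) j (by omega)
    have hs1 : M-(j+2)+1 = M-(j+1) := by omega
    have hs2 : M-(j+2)+2 = M-j := by omega
    rw [hs1, hs2] at hrec
    have heq : (j+1+1) = j+2 := rfl
    rw [heq]
    have hsub : (j+2) - 1 = j+1 := rfl
    have hsub2 : (j+1) - 1 = j := rfl
    rw [hsub]
    rw [hsub2] at IH
    have hEe : Polynomial.C (Ch (q:ℂ) (ε:ℂ) (M-(j+2)) (j+2)) * Polynomial.X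
        + Polynomial.C (Dh (q:ℂ) (ε:ℂ) (M-(j+2)) (j+2)) * Polynomial.X^2 = Ee (q:ℂ) (ε:ℂ) M (j+2) := rfl
    rw [hEe] at hrec
    rw [hrec, Hh_succ]
    rw [Finset.prod_Icc_succ_top (by omega : 2 ≤ j+2)]
    linear_combination (-(Ee (q:ℂ) (ε:ℂ) M (j+2))) * (IH (by omega))

end Cas

lemma coprime_linear (p : Polynomial ℂ) (t : ℂ) (h : p.eval t ≠ 0) :
    IsCoprime p (Polynomial.X - Polynomial.C t) := by
  obtain ⟨g, hg⟩ := Polynomial.X_sub_C_dvd_sub_C_eval (a := t) (p := p)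
  refine ⟨Polynomial.C (p.eval t)⁻¹, -(Polynomial.C (p.eval t)⁻¹) * g, ?_⟩
  have h2 : p - (Polynomial.X - Polynomial.C t)*g = Polynomial.C (p.eval t) := by
    linear_combination hg
  calc Polynomial.C (p.eval t)⁻¹ * p + -(Polynomial.C (p.eval t)⁻¹) * g * (Polynomial.X - Polynomial.C t)
      = Polynomial.C (p.eval t)⁻¹ * (p - (Polynomial.X - Polynomial.C t)*g) := by ring
    _ = Polynomial.C (p.eval t)⁻¹ * Polynomial.C (p.eval t) := by rw [h2]
    _ = 1 := by rw [← Polynomial.C_mul, inv_mul_cancel₀ h, Polynomial.C_1]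

lemma coprime_X (p : Polynomial ℂ) (h : p.eval 0 ≠ 0) : IsCoprime p Polynomial.X := by
  have := coprime_linear p 0 h
  simpa using this

lemma coprime_C (p : Polynomial ℂ) {d : ℂ} (hd : d ≠ 0) : IsCoprime p (Polynomial.C d) :=
  ⟨0, Polynomial.C d⁻¹, by rw [zero_mul, zero_add, ← Polynomial.C_mul, inv_mul_cancel₀ hd, Polynomial.C_1]⟩

lemma one_sub_inv_pow_ne {q : ℝ} (hq0 : 0 < q) (hq1 : q < 1) {t : ℕ} (ht : 1 ≤ t) :
    (1:ℂ) - (((q:ℂ))^t)⁻¹ ≠ 0 := by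
  rw [sub_ne_zero]
  intro h
  have h2 : ((q:ℂ))^t = 1 := by
    have hne : ((q:ℂ))^t ≠ 0 := pow_ne_zero _ (by exact_mod_cast hq0.ne')
    field_simp at h
    exact h
  have : (q:ℝ)^t = 1 := by exact_mod_cast h2
  have : (q:ℝ)^t < 1 := pow_lt_one₀ hq0.le hq1 (by omega)
  linarith

section CopSec

variable {q ε : ℝ}

lemma Ch_eq (hq0 : 0 < q) (E : ℂ) (s i' : ℕ) :
    Ch (q:ℂ) E s (i'+1) = -(Dh (q:ℂ) E s (i'+1) * (E * (q:ℂ)^(i'))) := by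
  have hQne : (q:ℂ) ≠ 0 := by exact_mod_cast hq0.ne'
  simp only [Ch, Cc, Dh, Dc, cp, ak]
  by_cases hD : ((1 - E*(q:ℂ)^s) * (1 - E*(q:ℂ)^s*(q:ℂ))) = 0
  · rw [hD]
    simp [div_zero]
  · rcases mul_ne_zero_iff.1 hD with ⟨hd1, hd2⟩
    have hq' : ((q:ℂ))^(i'+1) ≠ 0 := pow_ne_zero _ hQne
    field_simp
    ring

lemma Ee_factor (hq0 : 0 < q) (E : ℂ) (M i' : ℕ) :
    Ee (q:ℂ) E M (i'+1) = Polynomial.C (Dh (q:ℂ) E (M-(i'+1)) (i'+1))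
      * (Polynomial.X * (Polynomial.X - Polynomial.C (E * (q:ℂ)^(i')))) := by
  rw [Ee, Ch_eq hq0]
  simp only [map_neg, map_mul]
  ring

lemma Dh_ne_zero (hq0 : 0 < q) (hq1 : q < 1) (hε0 : 0 < ε) (hε1 : ε < 1) (s k : ℕ) (hk : 2 ≤ k) :
    Dh (q:ℂ) (ε:ℂ) s k ≠ 0 := by
  have hQne : (q:ℂ) ≠ 0 := by exact_mod_cast hq0.ne'
  have hlt1 : ∀ t : ℕ, ε * q^t < 1 :=
    fun t => lt_of_le_of_lt (mul_le_of_le_one_right hε0.le (pow_le_one₀ hq0.le hq1.le)) hε1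
  have hcast : ∀ t : ℕ, cp (q:ℂ) (ε:ℂ) t = ((ε*q^t : ℝ):ℂ) := by
    intro t
    rw [cp]
    push_cast
    ring
  have hc : 1 - cp (q:ℂ) (ε:ℂ) s ≠ 0 := by rw [hcast s]; exact one_sub_ne (hlt1 s)
  have hcq : 1 - cp (q:ℂ) (ε:ℂ) s * (q:ℂ) ≠ 0 := by
    rw [show cp (q:ℂ) (ε:ℂ) s * (q:ℂ) = cp (q:ℂ) (ε:ℂ) (s+1) from (cp_succ _ _ s).symm,
      hcast (s+1)]
    exact one_sub_ne (hlt1 (s+1))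
  obtain ⟨k', rfl⟩ : ∃ k', k = k' + 2 := ⟨k - 2, by omega⟩
  have ha : ak (q:ℂ) (k'+2) ≠ 0 := by
    rw [ak]
    exact inv_ne_zero (pow_ne_zero _ hQne)
  have haq : 1 - ak (q:ℂ) (k'+2) * (q:ℂ) ≠ 0 := by
    rw [← ak_succ hQne k', ak]
    exact one_sub_inv_pow_ne hq0 hq1 (by omega)
  rw [Dh, Dc]
  exact mul_ne_zero (div_ne_zero (mul_ne_zero (mul_ne_zero ha (pow_ne_zero _ hQne)) haq)
    (mul_ne_zero hc hcq)) (pow_ne_zero _ (pow_ne_zero _ hQne))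

end CopSec

section Cop2

variable {q ε : ℝ}

theorem coprime_HP (hq0 : 0 < q) (hq1 : q < 1) (hε0 : 0 < ε) (hε1 : ε < 1) (M : ℕ) (hM : 2 ≤ M)
    (hev0 : (HP (q:ℂ) (ε:ℂ) M 0 M).eval 0 ≠ 0)
    (hev : ∀ i, 2 ≤ i → i ≤ M → (HP (q:ℂ) (ε:ℂ) M 0 M).eval ((ε:ℂ) * (q:ℂ)^(i-1)) ≠ 0) :
    IsCoprime (HP (q:ℂ) (ε:ℂ) M 0 M) (HP (q:ℂ) (ε:ℂ) M 1 (M-1)) := by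
  have hcas := casorati hq0 hq1 hε0 hε1 M M (by omega) le_rfl
  rw [Nat.sub_self] at hcas
  have hsub : M - (M-1) = 1 := by omega
  rw [hsub] at hcas
  have hcopG : IsCoprime (HP (q:ℂ) (ε:ℂ) M 0 M) (∏ i ∈ Finset.Icc 2 M, Ee (q:ℂ) (ε:ℂ) M i) := by
    apply IsCoprime.prod_right
    intro i hi
    rw [Finset.mem_Icc] at hi
    obtain ⟨i', rfl⟩ : ∃ i', i = i' + 1 := ⟨i - 1, by omega⟩
    rw [Ee_factor hq0]
    apply IsCoprime.mul_right
    · exact coprime_C _ (Dh_ne_zero hq0 hq1 hε0 hε1 _ _ (by omega))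
    · apply IsCoprime.mul_right
      · exact coprime_X _ hev0
      · exact coprime_linear _ _ (hev (i'+1) (by omega) (by omega))
  obtain ⟨α, β, hab⟩ := hcopG
  have hu : ((-1 : Polynomial ℂ))^M * (-1)^M = 1 := by
    rw [← pow_add, ← two_mul, pow_mul]
    norm_num
  have hG : ((-1 : Polynomial ℂ))^M * (HP (q:ℂ) (ε:ℂ) M 0 M * Hh (q:ℂ) (ε:ℂ) M (M-1)
      - HP (q:ℂ) (ε:ℂ) M 1 (M-1) * Hh (q:ℂ) (ε:ℂ) M M)
      = ∏ i ∈ Finset.Icc 2 M, Ee (q:ℂ) (ε:ℂ) M i := by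
    rw [hcas, ← mul_assoc, hu, one_mul]
  exact ⟨α + β * (-1)^M * Hh (q:ℂ) (ε:ℂ) M (M-1), -(β * (-1)^M * Hh (q:ℂ) (ε:ℂ) M M),
    by linear_combination hab + β * hG⟩

end Cop2

lemma eval_HP (Q E : ℂ) (M s k : ℕ) (x : ℂ) :
    (HP Q E M s k).eval x = ∑ j ∈ Finset.range (M+3), hcf Q E s k j * x^j := by
  rw [HP, Polynomial.eval_finset_sum]
  exact Finset.sum_congr rfl fun j _ => by simp

lemma phi11_tsum (a c Q y : ℂ) : phi11 a c Q y = ∑' j : ℕ, u Q a c j * y^j := rfl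

lemma phi11_eq_eval {q : ℝ} (hq0 : 0 < q) (E : ℂ) (M s k : ℕ) (hkM : k ≤ M) (x : ℂ) :
    phi11 (ak (q:ℂ) k) (cp (q:ℂ) E s) (q:ℂ) (x * (q:ℂ)^s) = (HP (q:ℂ) E M s k).eval x := by
  have hQne : (q:ℂ) ≠ 0 := by exact_mod_cast hq0.ne'
  rw [phi11_tsum, eval_HP]
  rw [tsum_eq_sum (s := Finset.range (M+3)) ?_]
  · apply Finset.sum_congr rfl
    intro j _
    rw [hcf, mul_pow, mul_assoc]
    ring
  · intro j hj
    rw [Finset.mem_range, not_lt] at hj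
    rw [ak, u_eq_zero (qPoch_inv_pow_vanish (q:ℂ) hQne (by omega)), zero_mul]

lemma HP_natDegree {q ε : ℝ} (hq0 : 0 < q) (hq1 : q < 1) (hε0 : 0 < ε) (hε1 : ε < 1) (M : ℕ) :
    (HP (q:ℂ) (ε:ℂ) M 0 M).natDegree = M := by
  have hQne : (q:ℂ) ≠ 0 := by exact_mod_cast hq0.ne'
  have hcoeffM : (HP (q:ℂ) (ε:ℂ) M 0 M).coeff M ≠ 0 := by
    rw [coeff_HP hQne _ (by omega) M, hcf]
    apply mul_ne_zero
    · rw [u, ak]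
      apply mul_ne_zero
      apply mul_ne_zero
      · apply div_ne_zero
        · exact qPoch_inv_pow_ne_zero hq0 hq1 le_rfl
        · apply mul_ne_zero
          · exact qPoch_real_ne_zero hq0 hq1.le hq0.le hq1 M
          · have : cp (q:ℂ) (ε:ℂ) 0 = ((ε : ℝ) : ℂ) := by simp [cp]
            rw [this]
            exact qPoch_real_ne_zero hq0 hq1.le hε0.le hε1 M
      · exact pow_ne_zero _ (by norm_num)
      · exact pow_ne_zero _ hQne
    · exact pow_ne_zero _ (pow_ne_zero _ hQne)
  apply le_antisymm
  · rw [Polynomial.natDegree_le_iff_coeff_eq_zero]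
    intro N hN
    rw [coeff_HP hQne _ (by omega) N]
    exact hcf_vanish hQne _ hN
  · exact Polynomial.le_natDegree_of_ne_zero hcoeffM

/-! ### choice of a good ε -/

lemma qPoch_cont (Q : ℂ) (j : ℕ) : Continuous fun c : ℂ => qPoch c Q j := by
  unfold qPoch
  exact continuous_finset_prod _ fun i _ => continuous_const.sub (continuous_id.mul continuous_const)

lemma qPoch_zero_left (Q : ℂ) (j : ℕ) : qPoch 0 Q j = 1 := by simp [qPoch]

lemma eval0_HP (Q E : ℂ) (M s k : ℕ) : (HP Q E M s k).eval 0 = 1 := by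
  rw [eval_HP]
  rw [Finset.sum_eq_single 0]
  · simp [hcf_zero_idx]
  · intro j _ hj
    rw [zero_pow hj, mul_zero]
  · intro h
    exact absurd (Finset.mem_range.2 (by omega)) h

section Choice

open Filter Topology

variable {q : ℝ}

lemma tendsto_eval_one (hq0 : 0 < q) (hq1 : q < 1) (M : ℕ) (w : ℂ) :
    Filter.Tendsto (fun e : ℝ => (HP (q:ℂ) ((e:ℝ):ℂ) M 0 M).eval ((e:ℂ)*w)) (𝓝 0) (𝓝 1) := by
  have hW : ∀ j, qPoch (q:ℂ) (q:ℂ) j ≠ 0 := qPoch_real_ne_zero hq0 hq1.le hq0.le hq1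
  have hrw : (fun e : ℝ => (HP (q:ℂ) ((e:ℝ):ℂ) M 0 M).eval ((e:ℂ)*w))
      = fun e : ℝ => ∑ j ∈ Finset.range (M+3), u (q:ℂ) (ak (q:ℂ) M) ((e:ℂ)) j * ((e:ℂ)*w)^j := by
    funext e
    rw [eval_HP]
    apply Finset.sum_congr rfl
    intro j _
    rw [hcf, cp]
    simp
  rw [hrw]
  have hterm : ∀ j ∈ Finset.range (M+3),
      Filter.Tendsto (fun e : ℝ => u (q:ℂ) (ak (q:ℂ) M) ((e:ℂ)) j * ((e:ℂ)*w)^j) (𝓝 0)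
        (𝓝 (if j = 0 then 1 else 0)) := by
    intro j _
    match j with
    | 0 =>
      simp only [if_pos rfl, pow_zero, mul_one, u_zero]
      exact tendsto_const_nhds
    | (j+1) =>
      simp only [if_neg (Nat.succ_ne_zero j)]
      have hden : Filter.Tendsto (fun e : ℝ => qPoch (q:ℂ) (q:ℂ) (j+1) * qPoch ((e:ℂ)) (q:ℂ) (j+1))
          (𝓝 0) (𝓝 (qPoch (q:ℂ) (q:ℂ) (j+1) * 1)) := by
        apply tendsto_const_nhds.mul
        have h1 : Filter.Tendsto (fun e : ℝ => ((e:ℝ):ℂ)) (𝓝 0) (𝓝 0) := by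
          have := Complex.continuous_ofReal.tendsto 0
          simpa using this
        have := ((qPoch_cont (q:ℂ) (j+1)).tendsto 0).comp h1
        simpa [qPoch_zero_left, Function.comp_def] using this
      have hdne : qPoch (q:ℂ) (q:ℂ) (j+1) * (1:ℂ) ≠ 0 := by
        rw [mul_one]
        exact hW (j+1)
      have hA : Filter.Tendsto (fun e : ℝ => u (q:ℂ) (ak (q:ℂ) M) ((e:ℂ)) (j+1)) (𝓝 0)
          (𝓝 (qPoch (ak (q:ℂ) M) (q:ℂ) (j+1) / (qPoch (q:ℂ) (q:ℂ) (j+1) * 1) * (-1)^(j+1)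
            * (q:ℂ)^((j+1)*((j+1)-1)/2))) := by
        unfold u
        exact ((tendsto_const_nhds.div hden hdne).mul tendsto_const_nhds).mul tendsto_const_nhds
      have hB : Filter.Tendsto (fun e : ℝ => ((e:ℂ)*w)^(j+1)) (𝓝 0) (𝓝 0) := by
        have h1 : Filter.Tendsto (fun e : ℝ => ((e:ℂ)*w)) (𝓝 0) (𝓝 0) := by
          have := (Complex.continuous_ofReal.mul continuous_const (g := fun _ => w)).tendsto 0
          simpa [Pi.mul_def] using this
        have := h1.pow (j+1)
        simpa [zero_pow (Nat.succ_ne_zero j)] using this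
      have := hA.mul hB
      simpa using this
  have h := tendsto_finset_sum (Finset.range (M+3)) hterm
  have hsum : (∑ j ∈ Finset.range (M+3), if j = 0 then (1:ℂ) else 0) = 1 := by
    rw [Finset.sum_ite_eq' (Finset.range (M+3)) 0 (fun _ => (1:ℂ))]
    simp
  rwa [hsum] at h

lemma exists_good_eps (hq0 : 0 < q) (hq1 : q < 1) (M : ℕ) (S : Set ℂ) (hS : S.Finite) :
    ∃ ε : ℝ, 0 < ε ∧ ε < 1 ∧ ((ε:ℂ) ∉ S) ∧
      (∀ i, 2 ≤ i → i ≤ M → (HP (q:ℂ) (ε:ℂ) M 0 M).eval ((ε:ℂ)*(q:ℂ)^(i-1)) ≠ 0) := by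
  have hev : ∀ᶠ e : ℝ in 𝓝 0, ∀ i ∈ Finset.Icc 2 M,
      (HP (q:ℂ) ((e:ℝ):ℂ) M 0 M).eval ((e:ℂ)*(q:ℂ)^(i-1)) ≠ 0 := by
    rw [Filter.eventually_all_finset]
    intro i _
    exact (tendsto_eval_one hq0 hq1 M ((q:ℂ)^(i-1))).eventually_ne one_ne_zero
  obtain ⟨δ, hδpos, hδ⟩ := Metric.eventually_nhds_iff.1 hev
  have hd'pos : (0:ℝ) < min δ 1 := lt_min hδpos one_pos
  have hinf : (Set.Ioo (0:ℝ) (min δ 1)).Infinite := Set.Ioo_infinite hd'pos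
  have hbadfin : ((fun e : ℝ => (e:ℂ)) ⁻¹' S).Finite :=
    hS.preimage (Function.Injective.injOn Complex.ofReal_injective)
  obtain ⟨ε, hmem⟩ := (hinf.diff hbadfin).nonempty
  obtain ⟨⟨hε0, hεδ⟩, hεS⟩ := hmem
  refine ⟨ε, hε0, lt_of_lt_of_le hεδ (min_le_right _ _), hεS, ?_⟩
  intro i h2 hM'
  have hdist : dist ε (0:ℝ) < δ := by
    rw [Real.dist_eq, sub_zero, abs_of_pos hε0]
    exact lt_of_lt_of_le hεδ (min_le_left _ _)
  exact hδ hdist i (Finset.mem_Icc.2 ⟨h2, hM'⟩)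

end Choice

/-! ### MvPolynomial plumbing -/

lemma eval_aeval (f : MvPolynomial (Fin 3) ℂ) (v : Fin 3 → Polynomial ℂ) (t : ℂ) :
    Polynomial.eval t (MvPolynomial.aeval v f) = MvPolynomial.eval (fun i => Polynomial.eval t (v i)) f := by
  induction f using MvPolynomial.induction_on with
  | C a => simp
  | add p q hp hq => simp [hp, hq]
  | mul_X p i hp => simp [hp]

lemma natDegree_aeval_le (f : MvPolynomial (Fin 3) ℂ) (A B : ℂ) :
    (MvPolynomial.aeval ![Polynomial.C A, Polynomial.C B, Polynomial.X] f).natDegree ≤ f.totalDegree := by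
  conv_lhs => rw [f.as_sum]
  rw [map_sum]
  apply Polynomial.natDegree_sum_le_of_forall_le
  intro v hv
  rw [MvPolynomial.aeval_monomial]
  refine le_trans (Polynomial.natDegree_mul_le) ?_
  have h0 : (algebraMap ℂ (Polynomial ℂ) (MvPolynomial.coeff v f)).natDegree = 0 :=
    Polynomial.natDegree_C _
  rw [h0, zero_add]
  rw [Finsupp.prod]
  refine le_trans (Polynomial.natDegree_prod_le _ _) ?_
  refine le_trans (Finset.sum_le_sum (f := fun n => (![Polynomial.C A, Polynomial.C B, Polynomial.X] n ^ (v n)).natDegree) (g := fun n => v n) ?_) ?_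
  · intro n _
    refine le_trans (Polynomial.natDegree_pow_le) ?_
    have h1 : (![Polynomial.C A, Polynomial.C B, Polynomial.X] n).natDegree ≤ 1 := by
      fin_cases n <;> simp
    calc v n * (![Polynomial.C A, Polynomial.C B, Polynomial.X] n).natDegree ≤ v n * 1 :=
          Nat.mul_le_mul_left _ h1
      _ = v n := mul_one _
  · exact MvPolynomial.le_totalDegree hv

lemma ak_injective {q : ℝ} (hq0 : 0 < q) (hq1 : q < 1) :
    Function.Injective (fun m : ℕ => ak (q:ℂ) m) := by
  intro m n h
  simp only [ak] at h
  have h2 : ((q:ℂ))^m = ((q:ℂ))^n := by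
    have hne : ∀ t : ℕ, ((q:ℂ))^t ≠ 0 := fun t => pow_ne_zero _ (by exact_mod_cast hq0.ne')
    exact inv_injective h
  have h3 : (q:ℝ)^m = (q:ℝ)^n := by exact_mod_cast h2
  exact ((pow_right_strictAnti₀ hq0 hq1).injective h3)

/-! ### the main theorem -/

theorem main_impossible {q : ℝ} (h0 : 0 < q) (h1 : q < 1) :
    ¬ ∃ P R : MvPolynomial (Fin 3) ℂ, R ≠ 0 ∧
        ∀ a c x : ℂ, (∀ n : ℕ, c * (q : ℂ) ^ n ≠ 1) →
          phi11 (a * q) (c * q) (q : ℂ) (x * q) * MvPolynomial.eval ![a, c, x] R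
            = phi11 a c (q : ℂ) x * MvPolynomial.eval ![a, c, x] P := by
  rintro ⟨P, R, hR, hid⟩
  have hQne : (q:ℂ) ≠ 0 := by exact_mod_cast h0.ne'
  -- a point where R does not vanish
  have hnz : ∃ w : Fin 3 → ℂ, MvPolynomial.eval w R ≠ 0 := by
    by_contra hcon
    push_neg at hcon
    exact hR (MvPolynomial.funext (fun x => by rw [hcon x, map_zero]))
  obtain ⟨w, hw⟩ := hnz
  have hwvec : ![w 0, w 1, w 2] = w := by
    funext i
    fin_cases i <;> rfl
  -- the one-variable restriction in a
  set pa : Polynomial ℂ := MvPolynomial.aeval ![Polynomial.X, Polynomial.C (w 1), Polynomial.C (w 2)] R with hpa_def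
  have hpa_eval : ∀ t : ℂ, pa.eval t = MvPolynomial.eval ![t, w 1, w 2] R := by
    intro t
    rw [hpa_def, eval_aeval]
    have hv : (fun i => Polynomial.eval t (![Polynomial.X, Polynomial.C (w 1), Polynomial.C (w 2)] i)) = ![t, w 1, w 2] := by
      funext i
      fin_cases i <;> simp
    rw [hv]
  have hpa_ne : pa ≠ 0 := by
    intro hcon
    apply hw
    rw [← hwvec]
    rw [← hpa_eval (w 0), hcon, Polynomial.eval_zero]
  -- choose m = m' + 2 large with pa (ak m) ≠ 0
  have hfin : {t : ℂ | pa.eval t = 0}.Finite := Polynomial.finite_setOf_isRoot hpa_ne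
  have hTfin : {m : ℕ | pa.eval (ak (q:ℂ) m) = 0}.Finite := by
    apply Set.Finite.preimage (Function.Injective.injOn (ak_injective h0 h1)) hfin
  obtain ⟨b, hb⟩ := hTfin.bddAbove
  obtain ⟨m, hm_tot, hm_good⟩ : ∃ m, R.totalDegree + 2 ≤ m ∧ pa.eval (ak (q:ℂ) m) ≠ 0 := by
    refine ⟨max (R.totalDegree + 2) (b+1), le_max_left _ _, ?_⟩
    intro hcon
    have h2 := hb hcon
    have h3 := le_max_right (R.totalDegree + 2) (b+1)
    omega
  obtain ⟨m', hm'⟩ : ∃ m', m = m' + 2 := ⟨m - 2, by omega⟩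
  -- one-variable restriction in c
  set pc : Polynomial ℂ := MvPolynomial.aeval ![Polynomial.C (ak (q:ℂ) m), Polynomial.X, Polynomial.C (w 2)] R with hpc_def
  have hpc_eval : ∀ t : ℂ, pc.eval t = MvPolynomial.eval ![ak (q:ℂ) m, t, w 2] R := by
    intro t
    rw [hpc_def, eval_aeval]
    have hv : (fun i => Polynomial.eval t (![Polynomial.C (ak (q:ℂ) m), Polynomial.X, Polynomial.C (w 2)] i)) = ![ak (q:ℂ) m, t, w 2] := by
      funext i
      fin_cases i <;> simp
    rw [hv]
  have hpc_ne : pc ≠ 0 := by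
    intro hcon
    apply hm_good
    rw [hpa_eval, ← hpc_eval (w 1), hcon, Polynomial.eval_zero]
  -- choose ε
  obtain ⟨ε, hε0, hε1, hεS, hev⟩ := exists_good_eps h0 h1 m {z : ℂ | pc.eval z = 0}
    (Polynomial.finite_setOf_isRoot hpc_ne)
  -- specialize P and R
  set Rp : Polynomial ℂ := MvPolynomial.aeval ![Polynomial.C (ak (q:ℂ) m), Polynomial.C ((ε:ℝ):ℂ), Polynomial.X] R with hRp_def
  set Pp : Polynomial ℂ := MvPolynomial.aeval ![Polynomial.C (ak (q:ℂ) m), Polynomial.C ((ε:ℝ):ℂ), Polynomial.X] P with hPp_def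
  have hRp_eval : ∀ t : ℂ, Rp.eval t = MvPolynomial.eval ![ak (q:ℂ) m, ((ε:ℝ):ℂ), t] R := by
    intro t
    rw [hRp_def, eval_aeval]
    have hv : (fun i => Polynomial.eval t (![Polynomial.C (ak (q:ℂ) m), Polynomial.C ((ε:ℝ):ℂ), Polynomial.X] i)) = ![ak (q:ℂ) m, ((ε:ℝ):ℂ), t] := by
      funext i
      fin_cases i <;> simp
    rw [hv]
  have hPp_eval : ∀ t : ℂ, Pp.eval t = MvPolynomial.eval ![ak (q:ℂ) m, ((ε:ℝ):ℂ), t] P := by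
    intro t
    rw [hPp_def, eval_aeval]
    have hv : (fun i => Polynomial.eval t (![Polynomial.C (ak (q:ℂ) m), Polynomial.C ((ε:ℝ):ℂ), Polynomial.X] i)) = ![ak (q:ℂ) m, ((ε:ℝ):ℂ), t] := by
      funext i
      fin_cases i <;> simp
    rw [hv]
  have hRp_ne : Rp ≠ 0 := by
    intro hcon
    apply hεS
    show pc.eval ((ε:ℝ):ℂ) = 0
    rw [hpc_eval, ← hRp_eval (w 2), hcon, Polynomial.eval_zero]
  -- the c-condition
  have hccond : ∀ n : ℕ, ((ε:ℝ):ℂ) * (q:ℂ)^n ≠ 1 := by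
    intro n hcon
    have hlt : ε * q^n < 1 :=
      lt_of_le_of_lt (mul_le_of_le_one_right hε0.le (pow_le_one₀ h0.le h1.le)) hε1
    have : ((ε * q^n : ℝ):ℂ) = 1 := by
      push_cast
      rw [← hcon]
    have : (ε * q^n : ℝ) = 1 := by exact_mod_cast this
    linarith
  -- the polynomial identity
  have hν : ∀ x : ℂ, phi11 (ak (q:ℂ) m * (q:ℂ)) (((ε:ℝ):ℂ) * (q:ℂ)) (q:ℂ) (x * (q:ℂ))
      = (HP (q:ℂ) ((ε:ℝ):ℂ) m 1 (m-1)).eval x := by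
    intro x
    rw [hm']
    have heq := phi11_eq_eval h0 ((ε:ℝ):ℂ) (m'+2) 1 (m'+1) (by omega) x
    have hsub : m'+2-1 = m'+1 := rfl
    rw [hsub]
    calc phi11 (ak (q:ℂ) (m'+2) * (q:ℂ)) (((ε:ℝ):ℂ) * (q:ℂ)) (q:ℂ) (x * (q:ℂ))
        = phi11 (ak (q:ℂ) (m'+1)) (cp (q:ℂ) ((ε:ℝ):ℂ) 1) (q:ℂ) (x * (q:ℂ)^1) := by
          rw [← ak_succ hQne m']
          simp [cp]
      _ = (HP (q:ℂ) ((ε:ℝ):ℂ) (m'+2) 1 (m'+1)).eval x := heq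
  have hμ : ∀ x : ℂ, phi11 (ak (q:ℂ) m) ((ε:ℝ):ℂ) (q:ℂ) x
      = (HP (q:ℂ) ((ε:ℝ):ℂ) m 0 m).eval x := by
    intro x
    have heq := phi11_eq_eval h0 ((ε:ℝ):ℂ) m 0 m le_rfl x
    simpa [cp] using heq
  have hpoly : HP (q:ℂ) ((ε:ℝ):ℂ) m 1 (m-1) * Rp = HP (q:ℂ) ((ε:ℝ):ℂ) m 0 m * Pp := by
    apply Polynomial.funext
    intro x
    rw [Polynomial.eval_mul, Polynomial.eval_mul]
    rw [← hν x, ← hμ x, hRp_eval, hPp_eval]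
    exact hid (ak (q:ℂ) m) ((ε:ℝ):ℂ) x hccond
  -- coprimality
  have hcop : IsCoprime (HP (q:ℂ) ((ε:ℝ):ℂ) m 0 m) (HP (q:ℂ) ((ε:ℝ):ℂ) m 1 (m-1)) := by
    apply coprime_HP h0 h1 hε0 hε1 m (by omega)
    · rw [eval0_HP]
      exact one_ne_zero
    · exact hev
  -- divisibility and degree contradiction
  have hdvd : HP (q:ℂ) ((ε:ℝ):ℂ) m 0 m ∣ Rp * HP (q:ℂ) ((ε:ℝ):ℂ) m 1 (m-1) := by
    refine ⟨Pp, ?_⟩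
    rw [mul_comm Rp _, hpoly]
  have hdvd2 : HP (q:ℂ) ((ε:ℝ):ℂ) m 0 m ∣ Rp := hcop.dvd_of_dvd_mul_right hdvd
  have hdeg := Polynomial.natDegree_le_of_dvd hdvd2 hRp_ne
  rw [HP_natDegree h0 h1 hε0 hε1 m] at hdeg
  have hbound := natDegree_aeval_le R (ak (q:ℂ) m) ((ε:ℝ):ℂ)
  rw [← hRp_def] at hbound
  omega

end Phi11Aux

/-- Uniqueness of the coefficients in the ₁φ₁ three-term recurrence, stated in
its equivalent form: the ratio ₁φ₁(aq; cq; q, xq) / ₁φ₁(a; c; q, x) is not a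
rational function of (a, c, x). -/
theorem phi11_shift_ratio_not_rational (q : ℝ) (h0 : 0 < q) (h1 : q < 1) :
    ¬ ∃ P R : MvPolynomial (Fin 3) ℂ, R ≠ 0 ∧
        ∀ a c x : ℂ, (∀ n : ℕ, c * (q : ℂ) ^ n ≠ 1) →
          phi11 (a * q) (c * q) (q : ℂ) (x * q) * MvPolynomial.eval ![a, c, x] R
            = phi11 a c (q : ℂ) x * MvPolynomial.eval ![a, c, x] P := by
  exact Phi11Aux.main_impossible h0 h1
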